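/- Let X ⊆ ℝⁿ be a closed convex set containing 0 in its interior, let F be a linear subspace of ℝⁿ, and let Π_F denote the orthogonal projection of ℝⁿ onto F. For a subset Y of F write Y^{ℏ,F} = {p ∈ F : ∀ x ∈ Y, ⟨x, p⟩ ≤ ℏ} for the ℏ-polar dual taken inside F. Then (Π_F X)^{ℏ,F} = X^ℏ ∩ F and (X ∩ F)^{ℏ,F} = Π_F(X^ℏ). -/

import Mathlib

open scoped RealInnerProductSpace

noncomputable section

/-- `ℝⁿ` with its Euclidean structure. -/
abbrev En (n : ℕ) := EuclideanSpace ℝ (Fin n)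

/-- The `ℏ`-polar dual `Xᵸ = {p : ∀ x ∈ X, ⟨x, p⟩ ≤ ℏ}`. -/
def polarDual (n : ℕ) (ℏ : ℝ) (X : Set (En n)) : Set (En n) :=
  {p | ∀ x ∈ X, ⟪x, p⟫ ≤ ℏ}

/-- The `ℏ`-polar dual of `Y` taken inside the subspace `F`:
`Y^{ℏ,F} = {p ∈ F : ∀ x ∈ Y, ⟨x, p⟩ ≤ ℏ}`. -/
def polarDualIn (n : ℕ) (ℏ : ℝ) (F : Submodule ℝ (En n)) (Y : Set (En n)) : Set (En n) :=
  {p | p ∈ F ∧ ∀ x ∈ Y, ⟪x, p⟫ ≤ ℏ}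

lemma polarDual_zero_mem (n : ℕ) (ℏ : ℝ) (hℏ : 0 < ℏ) (X : Set (En n)) :
    (0 : En n) ∈ polarDual n ℏ X := by
  intro x _; simp [hℏ.le]

lemma polarDual_convex (n : ℕ) (ℏ : ℝ) (X : Set (En n)) :
    Convex ℝ (polarDual n ℏ X) := by
  intro p hp q hq a b ha hb hab
  intro x hx
  have h1 := hp x hx
  have h2 := hq x hx
  calc ⟪x, a • p + b • q⟫ = a * ⟪x, p⟫ + b * ⟪x, q⟫ := by
        rw [inner_add_right, real_inner_smul_right, real_inner_smul_right]
    _ ≤ a * ℏ + b * ℏ := by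
        gcongr
    _ = ℏ := by rw [← add_mul, hab, one_mul]

lemma polarDual_isClosed (n : ℕ) (ℏ : ℝ) (X : Set (En n)) :
    IsClosed (polarDual n ℏ X) := by
  have : polarDual n ℏ X = ⋂ x ∈ X, {p : En n | ⟪x, p⟫ ≤ ℏ} := by
    ext p; simp [polarDual]
  rw [this]
  exact isClosed_biInter fun x _ =>
    isClosed_le (Continuous.inner continuous_const continuous_id) continuous_const

/-- The bipolar theorem for the one-sided `ℏ`-polar. -/
lemma bipolar (n : ℕ) (ℏ : ℝ) (hℏ : 0 < ℏ) (K : Set (En n))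
    (hcl : IsClosed K) (hconv : Convex ℝ K) (h0 : (0 : En n) ∈ K) :
    polarDual n ℏ (polarDual n ℏ K) = K := by
  ext y
  constructor
  · intro hy
    by_contra hyK
    obtain ⟨f, u, hfa, hfy⟩ := geometric_hahn_banach_closed_point hconv hcl hyK
    have hu : 0 < u := by
      have := hfa 0 h0
      simpa using this
    set v := (InnerProductSpace.toDual ℝ (En n)).symm f with hv
    have hvx : ∀ x : En n, ⟪v, x⟫ = f x := fun x =>
      InnerProductSpace.toDual_symm_apply
    set p := (ℏ / u) • v with hp
    have hpmem : p ∈ polarDual n ℏ K := by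
      intro x hx
      have : ⟪x, p⟫ = (ℏ / u) * f x := by
        rw [hp, real_inner_smul_right, real_inner_comm, hvx]
      rw [this]
      have hfx : f x ≤ u := (hfa x hx).le
      calc (ℏ / u) * f x ≤ (ℏ / u) * u := by
            have := (div_pos hℏ hu).le; gcongr
        _ = ℏ := div_mul_cancel₀ ℏ hu.ne'
    have hcontra := hy p hpmem
    have : ⟪p, y⟫ = (ℏ / u) * f y := by
      rw [hp, real_inner_smul_left, hvx]
    rw [this] at hcontra
    have : ℏ < (ℏ / u) * f y := by
      calc ℏ = (ℏ / u) * u := (div_mul_cancel₀ ℏ hu.ne').symm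
        _ < (ℏ / u) * f y := by have := div_pos hℏ hu; gcongr
    linarith
  · intro hy p hp
    have := hp y hy
    rwa [real_inner_comm] at this

lemma polarDual_bounded (n : ℕ) (ℏ : ℝ) (hℏ : 0 < ℏ) (X : Set (En n))
    (h0 : (0 : En n) ∈ interior X) :
    Bornology.IsBounded (polarDual n ℏ X) := by
  obtain ⟨ε, hε, hball⟩ := Metric.isOpen_iff.1 isOpen_interior 0 h0
  have hball' : Metric.ball (0 : En n) ε ⊆ X := hball.trans interior_subset
  apply Bornology.IsBounded.subset (Metric.isBounded_closedBall (x := (0:En n)) (r := 2 * ℏ / ε))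
  intro p hp
  rcases eq_or_ne p 0 with rfl | hpne
  · simp [le_div_iff₀ hε]
    positivity
  · have hnp : 0 < ‖p‖ := norm_pos_iff.2 hpne
    have hx : (ε / (2 * ‖p‖)) • p ∈ Metric.ball (0 : En n) ε := by
      simp only [Metric.mem_ball, dist_zero_right, norm_smul, Real.norm_eq_abs]
      rw [abs_of_pos (by positivity)]
      rw [div_mul_eq_mul_div, mul_comm]
      rw [div_lt_iff₀ (by positivity)]
      nlinarith
    have := hp _ (hball' hx)
    rw [real_inner_smul_left, real_inner_self_eq_norm_sq] at this
    have h1 : ε / (2 * ‖p‖) * ‖p‖ ^ 2 = ε * ‖p‖ / 2 := by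
      field_simp
    rw [h1] at this
    simp only [Metric.mem_closedBall, dist_zero_right]
    rw [le_div_iff₀ hε]
    nlinarith

/-- polar duality exchanges orthogonal projections and intersections:
`(Π_F X)^{ℏ,F} = Xᵸ ∩ F` and `(X ∩ F)^{ℏ,F} = Π_F (Xᵸ)` for a closed convex `X`
containing `0` in its interior. -/
theorem stmt1 (n : ℕ) (ℏ : ℝ) (hℏ : 0 < ℏ) (X : Set (En n))
    (hXcl : IsClosed X) (hXconv : Convex ℝ X) (h0 : (0 : En n) ∈ interior X)
    (F : Submodule ℝ (En n)) :
    polarDualIn n ℏ F ((fun z => (F.orthogonalProjection z : En n)) '' X)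
      = polarDual n ℏ X ∩ (F : Set (En n)) ∧
    polarDualIn n ℏ F (X ∩ (F : Set (En n)))
      = (fun z => (F.orthogonalProjection z : En n)) '' polarDual n ℏ X := by
  set P : En n → En n := fun z => (F.orthogonalProjection z : En n) with hP
  -- key: for x ∈ F, ⟪x, P p⟫ = ⟪x, p⟫
  have key : ∀ (x p : En n), x ∈ F → ⟪x, P p⟫ = ⟪x, p⟫ := by
    intro x p hx
    have horth : p - P p ∈ Fᗮ := F.sub_starProjection_mem_orthogonal p
    have : ⟪x, p - P p⟫ = 0 := horth x hx
    rw [inner_sub_right] at this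
    linarith
  have keyL : ∀ (x p : En n), x ∈ F → ⟪P p, x⟫ = ⟪p, x⟫ := by
    intro x p hx
    rw [real_inner_comm, key x p hx, real_inner_comm]
  have h0X : (0 : En n) ∈ X := interior_subset h0
  constructor
  · ext p
    simp only [polarDualIn, polarDual, Set.mem_setOf_eq, Set.mem_inter_iff,
      Set.mem_image, SetLike.mem_coe]
    constructor
    · rintro ⟨hpF, hall⟩
      refine ⟨fun x hx => ?_, hpF⟩
      have := hall (P x) ⟨x, hx, rfl⟩
      rw [real_inner_comm, key p x hpF, real_inner_comm] at this
      exact this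
    · rintro ⟨hall, hpF⟩
      refine ⟨hpF, ?_⟩
      rintro _ ⟨x, hx, rfl⟩
      rw [real_inner_comm, key p x hpF, real_inner_comm]
      exact hall x hx
  · -- second statement
    ext q
    simp only [polarDualIn, Set.mem_setOf_eq, Set.mem_image]
    constructor
    · rintro ⟨hqF, hall⟩
      -- hard direction: use bipolar on K := P '' (polarDual n ℏ X)
      set K := P '' (polarDual n ℏ X) with hK
      have hKconv : Convex ℝ K := by
        have : K = (F.subtype.comp (F.orthogonalProjection).toLinearMap :
            En n →ₗ[ℝ] En n) '' (polarDual n ℏ X) := rfl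
        rw [this]
        exact (polarDual_convex n ℏ X).linear_image _
      have hKcompact : IsCompact K := by
        have hXpc : IsCompact (polarDual n ℏ X) :=
          Metric.isCompact_of_isClosed_isBounded (polarDual_isClosed n ℏ X)
            (polarDual_bounded n ℏ hℏ X h0)
        exact hXpc.image (by
          exact Continuous.subtype_val (F.orthogonalProjection).continuous)
      have hKcl : IsClosed K := hKcompact.isClosed
      have hK0 : (0 : En n) ∈ K := by
        refine ⟨0, polarDual_zero_mem n ℏ hℏ X, ?_⟩
        simp [hP]
      have hbip := bipolar n ℏ hℏ K hKcl hKconv hK0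
      have hqK : q ∈ polarDual n ℏ (polarDual n ℏ K) := by
        intro y hy
        -- show P y ∈ X ∩ F, then use hall
        have hPyX : P y ∈ X := by
          rw [← bipolar n ℏ hℏ X hXcl hXconv h0X]
          intro p hp
          have hPp : P p ∈ K := ⟨p, hp, rfl⟩
          have := hy (P p) hPp
          have heq : ⟪p, P y⟫ = ⟪P p, y⟫ := by
            rw [real_inner_comm, ← key (P y) p (F.orthogonalProjection y).2,
              real_inner_comm, key (P p) y (F.orthogonalProjection p).2]
          rw [heq]; exact this
        have hPyF : P y ∈ F := SetLike.coe_mem _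
        have := hall (P y) ⟨hPyX, hPyF⟩
        rw [real_inner_comm, ← key q y hqF, real_inner_comm]
        exact this
      rw [hbip] at hqK
      exact hqK
    · rintro ⟨p, hp, rfl⟩
      refine ⟨(F.orthogonalProjection p).2, ?_⟩
      rintro x ⟨hxX, hxF⟩
      rw [key x p hxF]
      exact hp x hxX
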